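/- The map kl⁻¹ is monotone in both arguments: for all 0 ≤ x ≤ x' ≤ 1 and 0 ≤ b ≤ b', one has kl⁻¹(x,b) ≤ kl⁻¹(x',b'). -/

import Mathlib

open MeasureTheory ENNReal

/-- Binary Kullback–Leibler divergence `kl(q,p)` for `q, p ∈ [0,1]`, with the conventions
`0 · ln 0 = 0` and `kl(q,p) = ∞` when `p ∈ {0,1}` and `q ≠ p`. -/
noncomputable def klBin (q p : ℝ) : ℝ≥0∞ :=
  if (p = 0 ∨ p = 1) ∧ q ≠ p then ∞
  else ENNReal.ofReal (q * Real.log (q / p) + (1 - q) * Real.log ((1 - q) / (1 - p)))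

/-- Inverse binary KL divergence: `kl⁻¹(x,b) = sup { y ∈ [x,1] : kl(x,y) ≤ b }`. -/
noncomputable def klInv (x : ℝ) (b : ℝ≥0∞) : ℝ :=
  sSup {y : ℝ | x ≤ y ∧ y ≤ 1 ∧ klBin x y ≤ b}

lemma klBin_self (x : ℝ) : klBin x x = 0 := by
  unfold klBin
  rw [if_neg (by simp)]
  rcases eq_or_ne x 0 with rfl | hx0
  · norm_num
  rcases eq_or_ne x 1 with rfl | hx1
  · norm_num
  · rw [div_self hx0, div_self (by intro h; apply hx1; linarith)]
    simp

lemma klBin_anti (y : ℝ) (hy0 : 0 < y) (hy1 : y < 1) :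
    AntitoneOn (fun q => q * Real.log (q / y) + (1 - q) * Real.log ((1 - q) / (1 - y)))
      (Set.Icc 0 y) := by
  set g : ℝ → ℝ := fun q => q * Real.log q - q * Real.log y +
    ((1 - q) * Real.log (1 - q) - (1 - q) * Real.log (1 - y)) with hg
  have hgc : Continuous g := by
    exact (Real.continuous_mul_log.sub (continuous_id.mul continuous_const)).add
      ((Real.continuous_mul_log.comp (continuous_const.sub continuous_id)).sub
        ((continuous_const.sub continuous_id).mul continuous_const))
  have hderiv : ∀ q ∈ Set.Ioo (0:ℝ) y,
      HasDerivAt g (Real.log q - Real.log y + (-Real.log (1 - q) + Real.log (1 - y))) q := by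
    intro q hq
    have hq0 : 0 < q := hq.1
    have hq1 : q < 1 := hq.2.trans hy1
    have h1 : HasDerivAt (fun q : ℝ => q * Real.log q) (Real.log q + 1) q :=
      Real.hasDerivAt_mul_log hq0.ne'
    have h2 : HasDerivAt (fun q : ℝ => q * Real.log y) (Real.log y) q := by
      simpa using (hasDerivAt_id q).mul_const (Real.log y)
    have hinner : HasDerivAt (fun q : ℝ => 1 - q) (-1) q := by
      simpa using (hasDerivAt_id' q).const_sub (1:ℝ)
    have h3 : HasDerivAt (fun q : ℝ => (1 - q) * Real.log (1 - q))
        ((Real.log (1 - q) + 1) * (-1)) q :=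
      (Real.hasDerivAt_mul_log (by linarith : (1:ℝ) - q ≠ 0)).comp q hinner
    have h4 : HasDerivAt (fun q : ℝ => (1 - q) * Real.log (1 - y)) (-Real.log (1 - y)) q := by
      simpa using hinner.mul_const (Real.log (1 - y))
    have := (h1.sub h2).add (h3.sub h4)
    exact this.congr_deriv (by ring)
  have hanti : AntitoneOn g (Set.Icc 0 y) := by
    apply antitoneOn_of_deriv_nonpos (convex_Icc 0 y) hgc.continuousOn
    · intro q hq
      rw [interior_Icc] at hq
      exact (hderiv q hq).differentiableAt.differentiableWithinAt
    · intro q hq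
      rw [interior_Icc] at hq
      rw [(hderiv q hq).deriv]
      have hq0 := hq.1
      have hqy := hq.2
      have hq1 : q < 1 := hq.2.trans hy1
      have l1 : Real.log q ≤ Real.log y := Real.log_le_log hq.1 hq.2.le
      have l2 : Real.log (1 - y) ≤ Real.log (1 - q) :=
        Real.log_le_log (by linarith) (by linarith)
      linarith
  have heq : Set.EqOn (fun q => q * Real.log (q / y) + (1 - q) * Real.log ((1 - q) / (1 - y)))
      g (Set.Icc 0 y) := by
    intro q hq
    have hq1 : q < 1 := lt_of_le_of_lt hq.2 hy1
    have e2 : (1 - q) * Real.log ((1 - q) / (1 - y)) =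
        (1 - q) * Real.log (1 - q) - (1 - q) * Real.log (1 - y) := by
      rw [Real.log_div (by linarith) (by linarith), mul_sub]
    have e1 : q * Real.log (q / y) = q * Real.log q - q * Real.log y := by
      rcases eq_or_lt_of_le hq.1 with h | h
      · simp [← h]
      · rw [Real.log_div h.ne' hy0.ne', mul_sub]
    simp only [hg, e1, e2]
  intro a ha b hb hab
  rw [heq ha, heq hb]
  exact hanti ha hb hab

/-- Monotonicity of the inverse binary KL in both arguments. -/
theorem klInv_monotone (x x' b b' : ℝ)
    (hx0 : 0 ≤ x) (hxx' : x ≤ x') (hx'1 : x' ≤ 1)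
    (hb0 : 0 ≤ b) (hbb' : b ≤ b') :
    klInv x (ENNReal.ofReal b) ≤ klInv x' (ENNReal.ofReal b') := by
  set S' : Set ℝ := {y : ℝ | x' ≤ y ∧ y ≤ 1 ∧ klBin x' y ≤ ENNReal.ofReal b'} with hS'
  have hbdd : BddAbove S' := ⟨1, fun y hy => hy.2.1⟩
  have hx'S : x' ∈ S' := ⟨le_refl _, hx'1, by rw [klBin_self]; exact zero_le⟩
  have hne : Set.Nonempty {y : ℝ | x ≤ y ∧ y ≤ 1 ∧ klBin x y ≤ ENNReal.ofReal b} :=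
    ⟨x, le_refl _, hxx'.trans hx'1, by rw [klBin_self]; exact zero_le⟩
  apply csSup_le hne
  intro y hy
  obtain ⟨hxy, hy1, hkl⟩ := hy
  rcases le_or_gt y x' with h | h
  · exact h.trans (le_csSup hbdd hx'S)
  · -- y > x', show y ∈ S'
    have hy0 : 0 < y := lt_of_le_of_lt (hx0.trans hxx') h
    have hylt1 : y < 1 := by
      rcases lt_or_eq_of_le hy1 with h1 | h1
      · exact h1
      · exfalso
        subst h1
        have hx1 : x ≠ 1 := by linarith
        rw [klBin, if_pos ⟨Or.inr rfl, hx1⟩] at hkl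
        exact absurd (lt_of_le_of_lt hkl ENNReal.ofReal_lt_top) (lt_irrefl _)
    have hcond : ¬ ((y = 0 ∨ y = 1) ∧ x ≠ y) := by
      rintro ⟨h1 | h1, _⟩ <;> simp [h1] at hy0 hylt1 <;> linarith
    have hcond' : ¬ ((y = 0 ∨ y = 1) ∧ x' ≠ y) := by
      rintro ⟨h1 | h1, _⟩ <;> simp [h1] at hy0 hylt1 <;> linarith
    have hanti := klBin_anti y hy0 hylt1
    have hmemx : x ∈ Set.Icc 0 y := ⟨hx0, hxy⟩
    have hmemx' : x' ∈ Set.Icc 0 y := ⟨hx0.trans hxx', h.le⟩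
    have hle := hanti hmemx hmemx' hxx'
    have hkl' : klBin x' y ≤ ENNReal.ofReal b' := by
      rw [klBin, if_neg hcond']
      rw [klBin, if_neg hcond] at hkl
      calc ENNReal.ofReal _ ≤ ENNReal.ofReal _ := ENNReal.ofReal_le_ofReal hle
        _ ≤ ENNReal.ofReal b := hkl
        _ ≤ ENNReal.ofReal b' := ENNReal.ofReal_le_ofReal hbb'
    exact le_csSup hbdd ⟨h.le, hy1, hkl'⟩
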